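/- Let p ≥ 0 be an integer, let Q_p(z) = Σ_{k=0}^{p} a_k z^k with real coefficients a_0,…,a_p, and let μ be a nonnegative Borel measure on ℝ with ∫_ℝ 1/(1+|t|^{p+1}) dμ(t) < ∞. Define H(z) = Im[Q_p(z) + (1/π)∫_ℝ C_p(z,t) dμ(t)] for z = x+iy ∈ C₊. If G is subharmonic on C₊ and G(z) ≤ H(z) for all z ∈ C₊, then sup_{y>0} ∫_ℝ G(x+iy)/[x² + (y+1)²]^{(p+1)/2} dx < ∞. -/

import Mathlib

set_option maxHeartbeats 1000000

open MeasureTheory Real ENNReal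

/-- The modified Cauchy kernel of order `p` of the upper half plane. -/
noncomputable def modCauchy (p : ℕ) (z : ℂ) (t : ℝ) : ℂ :=
  if |t| ≤ 1 then 1 / (t - z)
  else 1 / (t - z) - ∑ k ∈ Finset.range (p + 1), z ^ k / (t : ℂ) ^ (k + 1)

/-- A function is subharmonic on an open set `Ω ⊆ ℂ` if it is upper semicontinuous on `Ω`
and satisfies the sub-mean value inequality on all sufficiently small circles. -/
def SubharmonicOnC (u : ℂ → ℝ) (Ω : Set ℂ) : Prop :=
  UpperSemicontinuousOn u Ω ∧
  ∀ a ∈ Ω, ∃ ε > (0 : ℝ), ∀ r : ℝ, 0 < r → r < ε →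
    u a ≤ (1 / (2 * π)) * ∫ θ in (0:ℝ)..(2 * π), u (a + r * Complex.exp (θ * Complex.I))

namespace Stmt13Aux

lemma integral_inv_sq_add (c : ℝ) (hc : 0 < c) :
    ∫ x : ℝ, (x ^ 2 + c ^ 2)⁻¹ = π / c := by
  have h := MeasureTheory.Measure.integral_comp_mul_left (fun x : ℝ => (x ^ 2 + c ^ 2)⁻¹) c
  have h2 : (fun x : ℝ => ((c * x) ^ 2 + c ^ 2)⁻¹)
      = fun x : ℝ => (c ^ 2)⁻¹ * (1 + x ^ 2)⁻¹ := by
    funext x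
    rw [← mul_inv]
    congr 1
    ring
  rw [h2] at h
  rw [integral_const_mul, integral_univ_inv_one_add_sq] at h
  have habs : |c⁻¹| = c⁻¹ := abs_of_pos (inv_pos.2 hc)
  rw [habs, smul_eq_mul] at h
  have : ∫ x : ℝ, (x ^ 2 + c ^ 2)⁻¹ = c * ((c ^ 2)⁻¹ * π) := by
    field_simp at h ⊢
    nlinarith [h]
  rw [this]
  field_simp

lemma integrable_inv_sq_add (c t : ℝ) (hc : 0 < c) :
    Integrable (fun x : ℝ => ((t - x) ^ 2 + c ^ 2)⁻¹) := by
  have h1 : Integrable (fun x : ℝ => (1 + x ^ 2)⁻¹) := integrable_inv_one_add_sq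
  have h2 : Integrable (fun x : ℝ => (1 + (c⁻¹ * x) ^ 2)⁻¹) :=
    (integrable_comp_mul_left_iff (fun x : ℝ => (1 + x ^ 2)⁻¹)
      (inv_ne_zero hc.ne')).2 h1
  have h3 : Integrable (fun x : ℝ => (x ^ 2 + c ^ 2)⁻¹) := by
    have := h2.const_mul ((c ^ 2)⁻¹)
    convert this using 1
    funext x
    rw [← mul_inv]
    congr 1
    field_simp
    ring
  have h4 := h3.comp_sub_right t
  convert h4 using 1
  funext x
  congr 2
  ring

lemma integral_inv_sq_add' (c t : ℝ) (hc : 0 < c) :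
    ∫ x : ℝ, ((t - x) ^ 2 + c ^ 2)⁻¹ = π / c := by
  have h : (fun x : ℝ => ((t - x) ^ 2 + c ^ 2)⁻¹)
      = fun x : ℝ => (fun u : ℝ => (u ^ 2 + c ^ 2)⁻¹) (x - t) := by
    funext x; simp only []; congr 1; ring
  rw [h, integral_sub_right_eq_self (fun u : ℝ => (u ^ 2 + c ^ 2)⁻¹) t]
  exact integral_inv_sq_add c hc

lemma lintegral_inv_sq_add (c t : ℝ) (hc : 0 < c) :
    ∫⁻ x : ℝ, ENNReal.ofReal (((t - x) ^ 2 + c ^ 2)⁻¹) = ENNReal.ofReal (π / c) := by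
  rw [← ofReal_integral_eq_lintegral_ofReal (integrable_inv_sq_add c t hc)
    (Filter.Eventually.of_forall fun x => by positivity), integral_inv_sq_add' c t hc]

lemma ofReal_integral_le {α : Type*} [MeasurableSpace α] (μ : Measure α) (f : α → ℝ) :
    ENNReal.ofReal (∫ x, f x ∂μ) ≤ ∫⁻ x, ENNReal.ofReal (f x) ∂μ := by
  by_cases hf : Integrable f μ
  · calc ENNReal.ofReal (∫ x, f x ∂μ) ≤ ENNReal.ofReal (∫ x, max (f x) 0 ∂μ) := by
          apply ENNReal.ofReal_le_ofReal
          exact integral_mono hf (hf.pos_part) (fun x => le_max_left _ _)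
    _ = ∫⁻ x, ENNReal.ofReal (max (f x) 0) ∂μ :=
          ofReal_integral_eq_lintegral_ofReal hf.pos_part
            (Filter.Eventually.of_forall fun x => le_max_right _ _)
    _ = ∫⁻ x, ENNReal.ofReal (f x) ∂μ := by
          congr 1; funext x
          rcases le_total 0 (f x) with h | h
          · rw [max_eq_left h]
          · rw [max_eq_right h, ENNReal.ofReal_eq_zero.2 h]; simp
  · rw [integral_undef hf]
    simp

lemma lintegral_inv_sq_add0 (c : ℝ) (hc : 0 < c) :
    ∫⁻ x : ℝ, ENNReal.ofReal ((x ^ 2 + c ^ 2)⁻¹) = ENNReal.ofReal (π / c) := by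
  rw [← lintegral_inv_sq_add c 0 hc]
  congr 1; funext x; congr 2; ring

lemma W_eq (p : ℕ) (c x : ℝ) :
    (x ^ 2 + c ^ 2) ^ (((p : ℝ) + 1) / 2) = Real.sqrt (x ^ 2 + c ^ 2) ^ (p + 1) := by
  have h0 : (0:ℝ) ≤ x ^ 2 + c ^ 2 := by positivity
  rw [Real.sqrt_eq_rpow, ← Real.rpow_natCast ((x ^ 2 + c ^ 2) ^ ((1:ℝ)/2)) (p + 1),
    ← Real.rpow_mul h0]
  congr 1
  push_cast
  ring

lemma sqrt_ge_c (c x : ℝ) (hc : 0 ≤ c) : c ≤ Real.sqrt (x ^ 2 + c ^ 2) := by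
  calc c = Real.sqrt (c ^ 2) := (Real.sqrt_sq hc).symm
  _ ≤ Real.sqrt (x ^ 2 + c ^ 2) := Real.sqrt_le_sqrt (by nlinarith)

lemma abs_im_pow_succ_le (z : ℂ) : ∀ n : ℕ,
    |(z ^ (n + 1)).im| ≤ (n + 1) * |z.im| * ‖z‖ ^ n := by
  intro n
  induction n with
  | zero => simp
  | succ n ih =>
    have h1 : |(z ^ (n + 1)).re| ≤ ‖z‖ ^ (n + 1) := by
      calc |(z ^ (n + 1)).re| ≤ ‖z ^ (n + 1)‖ := Complex.abs_re_le_norm _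
      _ = ‖z‖ ^ (n + 1) := norm_pow _ _
    have h3 : |z.re| ≤ ‖z‖ := Complex.abs_re_le_norm z
    have h4 : |z.im| ≤ ‖z‖ := Complex.abs_im_le_norm z
    have habs : (0:ℝ) ≤ ‖z‖ := norm_nonneg z
    have : z ^ (n + 2) = z ^ (n + 1) * z := by ring
    rw [this, Complex.mul_im]
    calc |(z ^ (n + 1)).re * z.im + (z ^ (n + 1)).im * z.re|
        ≤ |(z ^ (n + 1)).re| * |z.im| + |(z ^ (n + 1)).im| * |z.re| := by
          refine (abs_add_le _ _).trans ?_
          rw [abs_mul, abs_mul]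
      _ ≤ ‖z‖ ^ (n + 1) * |z.im|
          + ((n + 1) * |z.im| * ‖z‖ ^ n) * ‖z‖ := by
          gcongr
      _ ≤ ((n:ℝ) + 1 + 1) * |z.im| * ‖z‖ ^ (n + 1) := by
          have e : ((n:ℝ) + 1) * |z.im| * ‖z‖ ^ n * ‖z‖
              = ((n:ℝ) + 1) * |z.im| * ‖z‖ ^ (n + 1) := by ring
          rw [e]
          nlinarith [abs_nonneg z.im, pow_nonneg habs (n+1)]
      _ = (↑(n + 1) + 1) * |z.im| * ‖z‖ ^ (n + 1) := by push_cast; ring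

lemma geom_aux (z T : ℂ) (hT : T ≠ 0) (hTz : T - z ≠ 0) : ∀ n : ℕ,
    1 / (T - z) - ∑ k ∈ Finset.range n, z ^ k / T ^ (k + 1) = z ^ n / (T ^ n * (T - z)) := by
  intro n
  induction n with
  | zero => simp
  | succ n ih =>
    rw [Finset.sum_range_succ, ← sub_sub, ih]
    have hTn : T ^ n ≠ 0 := pow_ne_zero _ hT
    have hTn1 : T ^ (n + 1) ≠ 0 := pow_ne_zero _ hT
    field_simp
    ring

lemma modCauchy_eq (p : ℕ) (z : ℂ) (t : ℝ) (hz : 0 < z.im) (ht : 1 < |t|) :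
    modCauchy p z t = z ^ (p + 1) / ((t : ℂ) ^ (p + 1) * ((t : ℂ) - z)) := by
  have hT : (t : ℂ) ≠ 0 := by
    simp only [ne_eq, Complex.ofReal_eq_zero]
    intro h; rw [h] at ht; norm_num at ht
  have hTz : (t : ℂ) - z ≠ 0 := by
    intro h
    have := congrArg Complex.im h
    simp [Complex.sub_im, Complex.ofReal_im] at this
    rw [this] at hz; exact lt_irrefl _ hz
  rw [modCauchy, if_neg (not_le.2 ht)]
  exact geom_aux z _ hT hTz (p + 1)

/-- The dominating kernel. -/
noncomputable def Bker (p : ℕ) (y x t : ℝ) : ℝ :=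
  if |t| ≤ 1 then y / ((t - x) ^ 2 + y ^ 2)
  else ((p + 1) * y * Real.sqrt (x ^ 2 + y ^ 2) ^ p / Real.sqrt ((t - x) ^ 2 + y ^ 2)
      + Real.sqrt (x ^ 2 + y ^ 2) ^ (p + 1) * (y / ((t - x) ^ 2 + y ^ 2))) / |t| ^ (p + 1)

lemma Bker_nonneg (p : ℕ) (y x t : ℝ) (hy : 0 < y) : 0 ≤ Bker p y x t := by
  rw [Bker]
  split
  · positivity
  · positivity

lemma im_modCauchy_le (p : ℕ) (x y t : ℝ) (hy : 0 < y) :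
    (modCauchy p (x + y * Complex.I) t).im ≤ Bker p y x t := by
  set z : ℂ := x + y * Complex.I with hzdef
  have hzre : z.re = x := by simp [hzdef]
  have hzim : z.im = y := by simp [hzdef]
  have hNsq : Complex.normSq ((t : ℂ) - z) = (t - x) ^ 2 + y ^ 2 := by
    rw [Complex.normSq_apply]
    simp [Complex.sub_re, Complex.sub_im, hzre, hzim]
    ring
  have hNpos : 0 < (t - x) ^ 2 + y ^ 2 := by positivity
  have hA : ‖z‖ = Real.sqrt (x ^ 2 + y ^ 2) := by
    rw [Complex.norm_def, Complex.normSq_apply, hzre, hzim]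
    congr 1; ring
  set A := Real.sqrt (x ^ 2 + y ^ 2) with hAdef
  set D := Real.sqrt ((t - x) ^ 2 + y ^ 2) with hDdef
  have hD2 : D ^ 2 = (t - x) ^ 2 + y ^ 2 := Real.sq_sqrt hNpos.le
  have hDpos : 0 < D := Real.sqrt_pos.2 hNpos
  have hApos : 0 < A := Real.sqrt_pos.2 (by positivity)
  by_cases ht : |t| ≤ 1
  · rw [Bker, if_pos ht, modCauchy, if_pos ht]
    rw [one_div, Complex.inv_im, hNsq]
    have : ((t : ℂ) - z).im = -y := by simp [Complex.sub_im, hzim]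
    rw [this]
    rw [neg_neg]
  · push_neg at ht
    rw [Bker, if_neg (not_le.2 ht), modCauchy_eq p z t (by rw [hzim]; exact hy) ht]
    have htn0 : (t : ℝ) ≠ 0 := by intro h; rw [h] at ht; norm_num at ht
    have hTpow : ((t : ℂ)) ^ (p + 1) = ((t ^ (p + 1) : ℝ) : ℂ) := by push_cast; ring
    have key : z ^ (p + 1) / ((t : ℂ) ^ (p + 1) * ((t : ℂ) - z))
        = (z ^ (p + 1) / ((t : ℂ) - z)) / ((t ^ (p + 1) : ℝ) : ℂ) := by
      rw [hTpow]; rw [div_div]; ring_nf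
    rw [key, Complex.div_ofReal_im]
    have him : (z ^ (p + 1) / ((t : ℂ) - z)).im
        = ((z ^ (p + 1)).im * (t - x) + (z ^ (p + 1)).re * y) / ((t - x) ^ 2 + y ^ 2) := by
      rw [Complex.div_im, hNsq]
      have h1 : ((t : ℂ) - z).re = t - x := by simp [Complex.sub_re, hzre]
      have h2 : ((t : ℂ) - z).im = -y := by simp [Complex.sub_im, hzim]
      rw [h1, h2]
      ring
    rw [him]
    -- bound
    have hub1 : |(z ^ (p + 1)).im| ≤ (p + 1) * y * A ^ p := by
      have := abs_im_pow_succ_le z p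
      rw [hzim, hA, abs_of_pos hy] at this
      exact_mod_cast this
    have hub2 : |(z ^ (p + 1)).re| ≤ A ^ (p + 1) := by
      calc |(z ^ (p + 1)).re| ≤ ‖z ^ (p + 1)‖ := Complex.abs_re_le_norm _
      _ = A ^ (p + 1) := by rw [norm_pow, hA]
    have htx : |t - x| ≤ D := by
      rw [hDdef]
      have : |t - x| = Real.sqrt ((t - x) ^ 2) := (Real.sqrt_sq_eq_abs _).symm
      rw [this]
      exact Real.sqrt_le_sqrt (by nlinarith)
    have habs_tn : (0:ℝ) < |t| ^ (p + 1) := by positivity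
    -- final chain
    have hnum : (z ^ (p + 1)).im * (t - x) + (z ^ (p + 1)).re * y
        ≤ (p + 1) * y * A ^ p * D + A ^ (p + 1) * y := by
      have e1 : (z ^ (p + 1)).im * (t - x) ≤ (p + 1) * y * A ^ p * D := by
        calc (z ^ (p + 1)).im * (t - x) ≤ |(z ^ (p + 1)).im * (t - x)| := le_abs_self _
        _ = |(z ^ (p + 1)).im| * |t - x| := abs_mul _ _
        _ ≤ ((p + 1) * y * A ^ p) * D := by
            apply mul_le_mul hub1 htx (abs_nonneg _) (by positivity)
      have e2 : (z ^ (p + 1)).re * y ≤ A ^ (p + 1) * y := by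
        have : (z ^ (p + 1)).re ≤ A ^ (p + 1) := (le_abs_self _).trans hub2
        exact mul_le_mul_of_nonneg_right this hy.le
      linarith
    calc ((z ^ (p + 1)).im * (t - x) + (z ^ (p + 1)).re * y) / ((t - x) ^ 2 + y ^ 2) / t ^ (p + 1)
        ≤ |((z ^ (p + 1)).im * (t - x) + (z ^ (p + 1)).re * y) / ((t - x) ^ 2 + y ^ 2) / t ^ (p + 1)| :=
          le_abs_self _
      _ = |(z ^ (p + 1)).im * (t - x) + (z ^ (p + 1)).re * y| / ((t - x) ^ 2 + y ^ 2) / |t| ^ (p + 1) := by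
          rw [abs_div, abs_div, abs_pow, abs_of_pos hNpos]
      _ ≤ ((p + 1) * y * A ^ p * D + A ^ (p + 1) * y) / ((t - x) ^ 2 + y ^ 2) / |t| ^ (p + 1) := by
          gcongr
          refine abs_le.2 ⟨?_, hnum⟩
          · -- lower bound : -(..) ≤ num, i.e. -num ≤ bound
            have e1 : -((z ^ (p + 1)).im * (t - x)) ≤ (p + 1) * y * A ^ p * D := by
              calc -((z ^ (p + 1)).im * (t - x)) ≤ |(z ^ (p + 1)).im * (t - x)| := neg_le_abs _
              _ = |(z ^ (p + 1)).im| * |t - x| := abs_mul _ _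
              _ ≤ ((p + 1) * y * A ^ p) * D := mul_le_mul hub1 htx (abs_nonneg _) (by positivity)
            have e2 : -((z ^ (p + 1)).re * y) ≤ A ^ (p + 1) * y := by
              have : -(z ^ (p + 1)).re ≤ A ^ (p + 1) := (neg_le_abs _).trans hub2
              nlinarith
            linarith
      _ = ((p + 1) * y * A ^ p / D + A ^ (p + 1) * (y / ((t - x) ^ 2 + y ^ 2))) / |t| ^ (p + 1) := by
          have e : ((p + 1) * y * A ^ p * D + A ^ (p + 1) * y) / ((t - x) ^ 2 + y ^ 2)
              = (p + 1) * y * A ^ p / D + A ^ (p + 1) * (y / ((t - x) ^ 2 + y ^ 2)) := by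
            rw [← hD2]
            field_simp
          rw [e]
  -- done

/-- the central per-`t` estimate on the `x`-integral of the kernel -/
lemma lint_x (p : ℕ) (y t : ℝ) (hy : 0 < y) :
    ∫⁻ x : ℝ, ENNReal.ofReal (Bker p y x t / Real.sqrt (x ^ 2 + (y + 1) ^ 2) ^ (p + 1))
      ≤ ENNReal.ofReal ((2 * (p + 2) * π) * (1 / (1 + |t| ^ (p + 1)))) := by
  set c : ℝ := y + 1 with hcdef
  have hc : 0 < c := by positivity
  have hc1 : 1 ≤ c := by rw [hcdef]; linarith
  by_cases ht : |t| ≤ 1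
  · have hpt : ∀ x : ℝ, Bker p y x t / Real.sqrt (x ^ 2 + c ^ 2) ^ (p + 1)
        ≤ y * ((t - x) ^ 2 + y ^ 2)⁻¹ := by
      intro x
      rw [Bker, if_pos ht]
      have hW1 : 1 ≤ Real.sqrt (x ^ 2 + c ^ 2) ^ (p + 1) :=
        one_le_pow₀ (hc1.trans (sqrt_ge_c c x hc.le))
      calc y / ((t - x) ^ 2 + y ^ 2) / Real.sqrt (x ^ 2 + c ^ 2) ^ (p + 1)
          ≤ y / ((t - x) ^ 2 + y ^ 2) / 1 := by gcongr
        _ = y * ((t - x) ^ 2 + y ^ 2)⁻¹ := by rw [div_one, div_eq_mul_inv]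
    calc ∫⁻ x : ℝ, ENNReal.ofReal (Bker p y x t / Real.sqrt (x ^ 2 + c ^ 2) ^ (p + 1))
        ≤ ∫⁻ x : ℝ, ENNReal.ofReal (y * ((t - x) ^ 2 + y ^ 2)⁻¹) :=
          lintegral_mono fun x => ENNReal.ofReal_le_ofReal (hpt x)
      _ = ENNReal.ofReal y * ∫⁻ x : ℝ, ENNReal.ofReal (((t - x) ^ 2 + y ^ 2)⁻¹) := by
          rw [← lintegral_const_mul' _ _ ENNReal.ofReal_ne_top]
          congr 1; funext x
          rw [← ENNReal.ofReal_mul hy.le]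
      _ = ENNReal.ofReal y * ENNReal.ofReal (π / y) := by rw [lintegral_inv_sq_add y t hy]
      _ = ENNReal.ofReal π := by
          rw [← ENNReal.ofReal_mul hy.le]
          congr 1
          field_simp
      _ ≤ ENNReal.ofReal ((2 * (p + 2) * π) * (1 / (1 + |t| ^ (p + 1)))) := by
          apply ENNReal.ofReal_le_ofReal
          have h1 : |t| ^ (p + 1) ≤ 1 := pow_le_one₀ (abs_nonneg t) ht
          have h2 : 0 < 1 + |t| ^ (p + 1) := by positivity
          rw [mul_one_div, le_div_iff₀ h2]
          nlinarith [pi_pos]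
  · push_neg at ht
    have htp : 1 ≤ |t| ^ (p + 1) := one_le_pow₀ ht.le
    have htp0 : 0 < |t| ^ (p + 1) := by positivity
    set n : ℕ := p + 1 with hndef
    set s1 : ℝ := ((p + 1) * y / 2 + y) / |t| ^ n with hs1
    set s2 : ℝ := ((p + 1) * y / 2) / |t| ^ n with hs2
    have hs1nn : 0 ≤ s1 := by positivity
    have hs2nn : 0 ≤ s2 := by positivity
    have hpt : ∀ x : ℝ, Bker p y x t / Real.sqrt (x ^ 2 + c ^ 2) ^ n
        ≤ s1 * ((t - x) ^ 2 + y ^ 2)⁻¹ + s2 * (x ^ 2 + c ^ 2)⁻¹ := by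
      intro x
      rw [Bker, if_neg (not_le.2 ht)]
      set A := Real.sqrt (x ^ 2 + y ^ 2) with hAdef
      set D := Real.sqrt ((t - x) ^ 2 + y ^ 2) with hDdef
      set R := Real.sqrt (x ^ 2 + c ^ 2) with hRdef
      have hDN : 0 < (t - x) ^ 2 + y ^ 2 := by positivity
      have hRN : 0 < x ^ 2 + c ^ 2 := by positivity
      have hD2 : D ^ 2 = (t - x) ^ 2 + y ^ 2 := Real.sq_sqrt hDN.le
      have hR2 : R ^ 2 = x ^ 2 + c ^ 2 := Real.sq_sqrt hRN.le
      have hDpos : 0 < D := Real.sqrt_pos.2 hDN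
      have hRpos : 0 < R := Real.sqrt_pos.2 hRN
      have hAnn : 0 ≤ A := Real.sqrt_nonneg _
      have hAR : A ≤ R := by
        rw [hAdef, hRdef]
        apply Real.sqrt_le_sqrt
        nlinarith [hc1]
      have key1 : (p + 1) * y * A ^ p / D / R ^ n
          ≤ (p + 1) * y / 2 * (((t - x) ^ 2 + y ^ 2)⁻¹ + (x ^ 2 + c ^ 2)⁻¹) := by
        have hAp : A ^ p ≤ R ^ p := pow_le_pow_left₀ hAnn hAR p
        have e1 : (p + 1) * y * A ^ p / D / R ^ n ≤ (p + 1) * y / (D * R) := by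
          rw [div_div]
          have e : ((p:ℝ) + 1) * y / (D * R) = ((p:ℝ) + 1) * y * R ^ p / (D * R ^ n) := by
            rw [hndef, pow_succ]
            field_simp
          rw [e]
          gcongr
        have e2 : (1:ℝ) / (D * R) ≤ 1 / 2 * (((t - x) ^ 2 + y ^ 2)⁻¹ + (x ^ 2 + c ^ 2)⁻¹) := by
          rw [← hD2, ← hR2, div_le_iff₀ (by positivity)]
          have e : 1 / 2 * ((D ^ 2)⁻¹ + (R ^ 2)⁻¹) * (D * R) = (D ^ 2 + R ^ 2) / (2 * D * R) := by
            field_simp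
            ring
          rw [e, le_div_iff₀ (by positivity)]
          nlinarith [sq_nonneg (D - R)]
        calc (p + 1) * y * A ^ p / D / R ^ n ≤ (p + 1) * y / (D * R) := e1
          _ = ((p + 1) * y) * (1 / (D * R)) := by ring
          _ ≤ ((p + 1) * y) * (1 / 2 * (((t - x) ^ 2 + y ^ 2)⁻¹ + (x ^ 2 + c ^ 2)⁻¹)) :=
              mul_le_mul_of_nonneg_left e2 (by positivity)
          _ = (p + 1) * y / 2 * (((t - x) ^ 2 + y ^ 2)⁻¹ + (x ^ 2 + c ^ 2)⁻¹) := by ring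
      have key2 : A ^ n * (y / ((t - x) ^ 2 + y ^ 2)) / R ^ n
          ≤ y * ((t - x) ^ 2 + y ^ 2)⁻¹ := by
        have hApR : A ^ n / R ^ n ≤ 1 :=
          div_le_one_of_le₀ (pow_le_pow_left₀ hAnn hAR _) (by positivity)
        calc A ^ n * (y / ((t - x) ^ 2 + y ^ 2)) / R ^ n
            = (A ^ n / R ^ n) * (y * ((t - x) ^ 2 + y ^ 2)⁻¹) := by
              rw [div_eq_mul_inv, div_eq_mul_inv, div_eq_mul_inv]
              ring
          _ ≤ 1 * (y * ((t - x) ^ 2 + y ^ 2)⁻¹) :=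
              mul_le_mul_of_nonneg_right hApR (by positivity)
          _ = y * ((t - x) ^ 2 + y ^ 2)⁻¹ := one_mul _
      calc ((p + 1) * y * A ^ p / D + A ^ n * (y / ((t - x) ^ 2 + y ^ 2))) / |t| ^ n / R ^ n
          = ((p + 1) * y * A ^ p / D / R ^ n + A ^ n * (y / ((t - x) ^ 2 + y ^ 2)) / R ^ n) / |t| ^ n := by
            rw [← add_div, div_div, div_div, mul_comm (|t| ^ n) (R ^ n)]
        _ ≤ ((p + 1) * y / 2 * (((t - x) ^ 2 + y ^ 2)⁻¹ + (x ^ 2 + c ^ 2)⁻¹)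
              + y * ((t - x) ^ 2 + y ^ 2)⁻¹) / |t| ^ n := by
            gcongr
        _ = s1 * ((t - x) ^ 2 + y ^ 2)⁻¹ + s2 * (x ^ 2 + c ^ 2)⁻¹ := by
            rw [hs1, hs2]
            field_simp
            ring
    calc ∫⁻ x : ℝ, ENNReal.ofReal (Bker p y x t / Real.sqrt (x ^ 2 + c ^ 2) ^ n)
        ≤ ∫⁻ x : ℝ, (ENNReal.ofReal (s1 * ((t - x) ^ 2 + y ^ 2)⁻¹)
            + ENNReal.ofReal (s2 * (x ^ 2 + c ^ 2)⁻¹)) := by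
          apply lintegral_mono fun x => ?_
          exact (ENNReal.ofReal_le_ofReal (hpt x)).trans (ENNReal.ofReal_add_le)
      _ = (∫⁻ x : ℝ, ENNReal.ofReal (s1 * ((t - x) ^ 2 + y ^ 2)⁻¹))
            + ∫⁻ x : ℝ, ENNReal.ofReal (s2 * (x ^ 2 + c ^ 2)⁻¹) := by
          apply lintegral_add_left
          apply Measurable.ennreal_ofReal
          apply Measurable.const_mul
          apply Measurable.inv
          exact (((continuous_const.sub continuous_id).pow 2).add continuous_const).measurable
      _ = ENNReal.ofReal s1 * ENNReal.ofReal (π / y) + ENNReal.ofReal s2 * ENNReal.ofReal (π / c) := by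
          rw [← lintegral_inv_sq_add y t hy, ← lintegral_inv_sq_add0 c hc]
          rw [← lintegral_const_mul' _ _ ENNReal.ofReal_ne_top,
            ← lintegral_const_mul' _ _ ENNReal.ofReal_ne_top]
          congr 1
          · congr 1; funext x; rw [← ENNReal.ofReal_mul hs1nn]
          · congr 1; funext x; rw [← ENNReal.ofReal_mul hs2nn]
      _ = ENNReal.ofReal (s1 * (π / y) + s2 * (π / c)) := by
          rw [← ENNReal.ofReal_mul hs1nn, ← ENNReal.ofReal_mul hs2nn,
            ENNReal.ofReal_add (by positivity) (by positivity)]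
      _ ≤ ENNReal.ofReal ((2 * (p + 2) * π) * (1 / (1 + |t| ^ (p + 1)))) := by
          apply ENNReal.ofReal_le_ofReal
          have e1 : s1 * (π / y) = (((p:ℝ) + 1) / 2 + 1) * π / |t| ^ n := by
            rw [hs1]
            field_simp
          have e2 : s2 * (π / c) ≤ ((p:ℝ) + 1) / 2 * π / |t| ^ n := by
            rw [hs2, div_mul_div_comm, div_le_div_iff₀ (by positivity) (by positivity)]
            have hyc : y ≤ c := by rw [hcdef]; linarith
            nlinarith [pi_pos, htp0, mul_pos (mul_pos (show (0:ℝ) < (p:ℝ)+1 by positivity) hy) pi_pos]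
          have e3 : (((p:ℝ) + 1) / 2 + 1) * π / |t| ^ n + ((p:ℝ) + 1) / 2 * π / |t| ^ n
              ≤ (2 * (p + 2) * π) * (1 / (1 + |t| ^ (p + 1))) := by
            rw [← add_div, mul_one_div, div_le_div_iff₀ (by positivity) (by positivity)]
            rw [hndef]
            nlinarith [pi_pos, htp, htp0,
              mul_le_mul_of_nonneg_left (show 1 + |t| ^ (p+1) ≤ 2 * |t| ^ (p+1) by
                  have := htp; rw [hndef] at this; linarith)
                (show (0:ℝ) ≤ ((p:ℝ) + 2) * π by positivity)]
          linarith
  -- done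

/-- integral bound for one polynomial term -/
lemma lint_poly (p k : ℕ) (hk : k ≤ p) (y : ℝ) (hy : 0 < y) (co : ℝ) :
    ∫⁻ x : ℝ, ENNReal.ofReal
        (|co| * k * y * Real.sqrt (x ^ 2 + y ^ 2) ^ (k - 1)
          / Real.sqrt (x ^ 2 + (y + 1) ^ 2) ^ (p + 1))
      ≤ ENNReal.ofReal (|co| * k * π) := by
  rcases Nat.eq_zero_or_pos k with hk0 | hkpos
  · subst hk0
    simp
  obtain ⟨m, rfl⟩ : ∃ m, k = m + 1 := ⟨k - 1, (Nat.succ_pred_eq_of_pos hkpos).symm⟩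
  simp only [Nat.cast_add, Nat.cast_one]
  set c : ℝ := y + 1 with hcdef
  have hc : 0 < c := by positivity
  have hc1 : 1 ≤ c := by rw [hcdef]; linarith
  have hyc : y ≤ c := by rw [hcdef]; linarith
  set q : ℕ := p - m with hqdef
  have hq1 : 1 ≤ q := by omega
  have hpq : p + 1 = m + 2 + (q - 1) := by omega
  set C : ℝ := |co| * (m + 1) * y with hCdef
  have hCnn : 0 ≤ C := by positivity
  have hpt : ∀ x : ℝ, C * Real.sqrt (x ^ 2 + y ^ 2) ^ (m + 1 - 1)
        / Real.sqrt (x ^ 2 + c ^ 2) ^ (p + 1)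
      ≤ (C / c ^ (q - 1)) * (x ^ 2 + c ^ 2)⁻¹ := by
    intro x
    set A := Real.sqrt (x ^ 2 + y ^ 2) with hAdef
    set R := Real.sqrt (x ^ 2 + c ^ 2) with hRdef
    have hRN : 0 < x ^ 2 + c ^ 2 := by positivity
    have hR2 : R ^ 2 = x ^ 2 + c ^ 2 := Real.sq_sqrt hRN.le
    have hRpos : 0 < R := Real.sqrt_pos.2 hRN
    have hAnn : 0 ≤ A := Real.sqrt_nonneg _
    have hAR : A ≤ R := Real.sqrt_le_sqrt (by nlinarith)
    have hcR : c ≤ R := sqrt_ge_c c x hc.le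
    have hsplit : R ^ (p + 1) = R ^ m * R ^ 2 * R ^ (q - 1) := by
      rw [hpq, pow_add, pow_add]
    calc C * A ^ (m + 1 - 1) / R ^ (p + 1)
        ≤ C * R ^ m / R ^ (p + 1) := by
          have : m + 1 - 1 = m := rfl
          rw [this]
          gcongr
      _ = C / (R ^ 2 * R ^ (q - 1)) := by
          rw [hsplit, _root_.eq_div_iff (by positivity)]
          field_simp
      _ ≤ C / (R ^ 2 * c ^ (q - 1)) := by
          gcongr
      _ = (C / c ^ (q - 1)) * (x ^ 2 + c ^ 2)⁻¹ := by
          rw [← hR2, mul_comm (R ^ 2), ← div_div, div_eq_mul_inv]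
  calc ∫⁻ x : ℝ, ENNReal.ofReal
        (|co| * (m + 1) * y * Real.sqrt (x ^ 2 + y ^ 2) ^ (m + 1 - 1)
          / Real.sqrt (x ^ 2 + c ^ 2) ^ (p + 1))
      ≤ ∫⁻ x : ℝ, ENNReal.ofReal ((C / c ^ (q - 1)) * (x ^ 2 + c ^ 2)⁻¹) := by
        apply lintegral_mono fun x => ENNReal.ofReal_le_ofReal ?_
        exact hpt x
    _ = ENNReal.ofReal (C / c ^ (q - 1)) * ENNReal.ofReal (π / c) := by
        rw [← lintegral_inv_sq_add0 c hc, ← lintegral_const_mul' _ _ ENNReal.ofReal_ne_top]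
        congr 1; funext x
        rw [← ENNReal.ofReal_mul (by positivity)]
    _ ≤ ENNReal.ofReal (|co| * (m + 1) * π) := by
        rw [← ENNReal.ofReal_mul (by positivity)]
        apply ENNReal.ofReal_le_ofReal
        have hcq : y ≤ c ^ q := by
          calc y ≤ c := hyc
          _ ≤ c ^ q := le_self_pow₀ hc1 (by omega)
        have e : C / c ^ (q - 1) * (π / c) = |co| * (m + 1) * π * (y / c ^ q) := by
          rw [hCdef]
          have : c ^ q = c ^ (q - 1) * c := by
            conv_lhs => rw [show q = (q - 1) + 1 by omega]
            rw [pow_succ]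
          rw [this]
          field_simp
        rw [e]
        have : y / c ^ q ≤ 1 := div_le_one_of_le₀ hcq (by positivity)
        nlinarith [pi_pos, abs_nonneg co, this, mul_nonneg (mul_nonneg (abs_nonneg co) (by positivity : (0:ℝ) ≤ (m:ℝ)+1)) pi_pos.le]

/-- pointwise bound on the imaginary part of the polynomial -/
lemma poly_im_le (p : ℕ) (a : ℕ → ℝ) (x y : ℝ) (hy : 0 < y) :
    (∑ k ∈ Finset.range (p + 1), (a k : ℂ) * (↑x + ↑y * Complex.I) ^ k).im
      ≤ ∑ k ∈ Finset.range (p + 1), |a k| * k * y * Real.sqrt (x ^ 2 + y ^ 2) ^ (k - 1) := by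
  set z : ℂ := ↑x + ↑y * Complex.I with hzdef
  have hzim : z.im = y := by simp [hzdef]
  have hA : ‖z‖ = Real.sqrt (x ^ 2 + y ^ 2) := by
    rw [Complex.norm_def, Complex.normSq_apply]
    simp [hzdef]
    congr 1; ring
  rw [Complex.im_sum]
  apply Finset.sum_le_sum
  intro k _
  rw [Complex.im_ofReal_mul]
  calc a k * (z ^ k).im ≤ |a k * (z ^ k).im| := le_abs_self _
    _ = |a k| * |(z ^ k).im| := abs_mul _ _
    _ ≤ |a k| * (k * y * Real.sqrt (x ^ 2 + y ^ 2) ^ (k - 1)) := by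
        apply mul_le_mul_of_nonneg_left ?_ (abs_nonneg _)
        cases k with
        | zero => simp
        | succ m =>
          have := abs_im_pow_succ_le z m
          rw [hzim, abs_of_pos hy, hA] at this
          have e : m + 1 - 1 = m := rfl
          rw [e]
          exact_mod_cast this
    _ = |a k| * k * y * Real.sqrt (x ^ 2 + y ^ 2) ^ (k - 1) := by ring

lemma measurableSet_abs_le : MeasurableSet {t : ℝ | |t| ≤ 1} :=
  measurableSet_le continuous_abs.measurable measurable_const

lemma f0_integrable (p : ℕ) (μ : Measure ℝ)
    (hμ : ∫⁻ t : ℝ, ENNReal.ofReal (1 / (1 + |t| ^ (p + 1))) ∂μ < ⊤) :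
    Integrable (fun t : ℝ => 1 / (1 + |t| ^ (p + 1))) μ := by
  have hcont : Continuous fun t : ℝ => 1 / (1 + |t| ^ (p + 1)) := by
    apply continuous_const.div ((continuous_const.add ((continuous_abs).pow _)))
    intro t
    exact (by positivity : (0:ℝ) < 1 + |t| ^ (p + 1)).ne'
  refine ⟨hcont.aestronglyMeasurable, ?_⟩
  rw [hasFiniteIntegral_iff_ofReal (Filter.Eventually.of_forall fun t => by positivity)]
  exact hμ

lemma sub_ne (z : ℂ) (hz : 0 < z.im) (t : ℝ) : (t : ℂ) - z ≠ 0 := by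
  intro h
  have := congrArg Complex.im h
  simp [Complex.sub_im, Complex.ofReal_im] at this
  rw [this] at hz; exact lt_irrefl _ hz

lemma abs_sub_ge (z : ℂ) (hz : 0 < z.im) (t : ℝ) : z.im ≤ ‖(t : ℂ) - z‖ := by
  have h1 : |((t : ℂ) - z).im| ≤ ‖(t : ℂ) - z‖ := Complex.abs_im_le_norm _
  have h2 : ((t : ℂ) - z).im = -z.im := by simp [Complex.sub_im]
  rw [h2, abs_neg, abs_of_pos hz] at h1
  exact h1

lemma modCauchy_measurable (p : ℕ) (z : ℂ) :
    Measurable fun t : ℝ => modCauchy p z t := by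
  unfold modCauchy
  apply Measurable.ite measurableSet_abs_le
  · apply Measurable.div measurable_const
    exact (Complex.continuous_ofReal.sub continuous_const).measurable
  · apply Measurable.sub
    · apply Measurable.div measurable_const
      exact (Complex.continuous_ofReal.sub continuous_const).measurable
    · apply Finset.measurable_sum
      intro k _
      apply Measurable.div measurable_const
      exact ((Complex.continuous_ofReal.pow (k + 1))).measurable

lemma modCauchy_bound (p : ℕ) (z : ℂ) (hz : 0 < z.im) (t : ℝ) :
    ‖modCauchy p z t‖
      ≤ (2 * (1 + ‖z‖ ^ (p + 1)) / z.im) * (1 / (1 + |t| ^ (p + 1))) := by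
  have habs := abs_sub_ge z hz t
  have habs' : 0 < ‖(t : ℂ) - z‖ := lt_of_lt_of_le hz habs
  have hAnn : (0:ℝ) ≤ ‖z‖ ^ (p + 1) := by positivity
  by_cases ht : |t| ≤ 1
  · rw [modCauchy, if_pos ht]
    have htp : |t| ^ (p + 1) ≤ 1 := pow_le_one₀ (abs_nonneg t) ht
    have hden : (0:ℝ) < 1 + |t| ^ (p + 1) := by positivity
    calc ‖1 / ((t : ℂ) - z)‖ = 1 / ‖(t : ℂ) - z‖ := by
          rw [norm_div, norm_one]
      _ ≤ 1 / z.im := by gcongr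
      _ ≤ (1 + ‖z‖ ^ (p + 1)) / z.im := by gcongr; linarith
      _ = (2 * (1 + ‖z‖ ^ (p + 1)) / z.im) * (1 / 2) := by ring
      _ ≤ (2 * (1 + ‖z‖ ^ (p + 1)) / z.im) * (1 / (1 + |t| ^ (p + 1))) := by
          apply mul_le_mul_of_nonneg_left _ (by positivity)
          apply one_div_le_one_div_of_le hden (by linarith)
  · push_neg at ht
    rw [modCauchy_eq p z t hz ht]
    have htp : (1:ℝ) ≤ |t| ^ (p + 1) := one_le_pow₀ ht.le
    have htp0 : (0:ℝ) < |t| ^ (p + 1) := by positivity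
    have hden : (0:ℝ) < 1 + |t| ^ (p + 1) := by positivity
    calc ‖z ^ (p + 1) / ((t : ℂ) ^ (p + 1) * ((t : ℂ) - z))‖
        = ‖z‖ ^ (p + 1) / (|t| ^ (p + 1) * ‖(t : ℂ) - z‖) := by
          rw [norm_div, norm_pow, norm_mul, norm_pow,
            Complex.norm_real, Real.norm_eq_abs]
      _ ≤ ‖z‖ ^ (p + 1) / (|t| ^ (p + 1) * z.im) := by gcongr
      _ ≤ (1 + ‖z‖ ^ (p + 1)) / (|t| ^ (p + 1) * z.im) := by gcongr; linarith
      _ = (2 * (1 + ‖z‖ ^ (p + 1)) / z.im) * (1 / (2 * |t| ^ (p + 1))) := by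
          field_simp
      _ ≤ (2 * (1 + ‖z‖ ^ (p + 1)) / z.im) * (1 / (1 + |t| ^ (p + 1))) := by
          apply mul_le_mul_of_nonneg_left _ (by positivity)
          apply one_div_le_one_div_of_le hden (by linarith)

lemma modCauchy_integrable (p : ℕ) (z : ℂ) (hz : 0 < z.im) (μ : Measure ℝ)
    (hμ : ∫⁻ t : ℝ, ENNReal.ofReal (1 / (1 + |t| ^ (p + 1))) ∂μ < ⊤) :
    Integrable (fun t : ℝ => modCauchy p z t) μ := by
  apply Integrable.mono' ((f0_integrable p μ hμ).const_mul
    (2 * (1 + ‖z‖ ^ (p + 1)) / z.im))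
    (modCauchy_measurable p z).aestronglyMeasurable
  exact Filter.Eventually.of_forall fun t => modCauchy_bound p z hz t

lemma Bker_measurable_t (p : ℕ) (y x : ℝ) (hy : 0 < y) :
    Measurable fun t : ℝ => Bker p y x t := by
  unfold Bker
  apply Measurable.ite measurableSet_abs_le
  · apply Measurable.div measurable_const
    exact (((continuous_id.sub continuous_const).pow 2).add continuous_const).measurable
  · apply Measurable.div _ ((continuous_abs.pow (p + 1)).measurable)
    apply Measurable.add
    · apply Measurable.div measurable_const
      exact (Continuous.sqrt (((continuous_id.sub continuous_const).pow 2).add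
        continuous_const)).measurable
    · apply Measurable.const_mul
      apply Measurable.div measurable_const
      exact (((continuous_id.sub continuous_const).pow 2).add continuous_const).measurable

lemma Bker_bound (p : ℕ) (y x : ℝ) (hy : 0 < y) (t : ℝ) :
    Bker p y x t ≤ (2 * ((p + 1) * Real.sqrt (x ^ 2 + y ^ 2) ^ p
        + Real.sqrt (x ^ 2 + y ^ 2) ^ (p + 1) / y + 1 / y)) * (1 / (1 + |t| ^ (p + 1))) := by
  set A := Real.sqrt (x ^ 2 + y ^ 2) with hAdef
  have hAnn : 0 ≤ A := Real.sqrt_nonneg _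
  set CB : ℝ := (p + 1) * A ^ p + A ^ (p + 1) / y + 1 / y with hCB
  have hCBnn : 0 ≤ CB := by positivity
  have hDN : 0 < (t - x) ^ 2 + y ^ 2 := by positivity
  have hyD : y ^ 2 ≤ (t - x) ^ 2 + y ^ 2 := by nlinarith [sq_nonneg (t - x)]
  by_cases ht : |t| ≤ 1
  · rw [Bker, if_pos ht]
    have htp : |t| ^ (p + 1) ≤ 1 := pow_le_one₀ (abs_nonneg t) ht
    have hden : (0:ℝ) < 1 + |t| ^ (p + 1) := by positivity
    calc y / ((t - x) ^ 2 + y ^ 2) ≤ y / y ^ 2 := by gcongr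
      _ = 1 / y := by rw [pow_two, ← div_div, div_self hy.ne']
      _ ≤ CB := by
          rw [hCB]
          have e1 : (0:ℝ) ≤ ((p:ℝ) + 1) * A ^ p := by positivity
          have e2 : (0:ℝ) ≤ A ^ (p + 1) / y := by positivity
          linarith
      _ = (2 * CB) * (1 / 2) := by ring
      _ ≤ (2 * CB) * (1 / (1 + |t| ^ (p + 1))) := by
          apply mul_le_mul_of_nonneg_left _ (by positivity)
          apply one_div_le_one_div_of_le hden (by linarith)
  · push_neg at ht
    rw [Bker, if_neg (not_le.2 ht)]
    have htp : (1:ℝ) ≤ |t| ^ (p + 1) := one_le_pow₀ ht.le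
    have htp0 : (0:ℝ) < |t| ^ (p + 1) := by positivity
    have hden : (0:ℝ) < 1 + |t| ^ (p + 1) := by positivity
    set D := Real.sqrt ((t - x) ^ 2 + y ^ 2) with hDdef
    have hD2 : D ^ 2 = (t - x) ^ 2 + y ^ 2 := Real.sq_sqrt hDN.le
    have hDpos : 0 < D := Real.sqrt_pos.2 hDN
    have hyDle : y ≤ D := by
      rw [hDdef]
      calc y = Real.sqrt (y ^ 2) := (Real.sqrt_sq hy.le).symm
      _ ≤ _ := Real.sqrt_le_sqrt (by nlinarith)
    have h1 : (p + 1) * y * A ^ p / D ≤ (p + 1) * A ^ p := by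
      rw [div_le_iff₀ hDpos]
      have : ((p:ℝ) + 1) * A ^ p * D = (p + 1) * A ^ p * D := rfl
      nlinarith [mul_nonneg (mul_nonneg (show (0:ℝ) ≤ (p:ℝ)+1 by positivity) hAnn) hAnn,
        mul_le_mul_of_nonneg_left hyDle (show (0:ℝ) ≤ ((p:ℝ)+1) * A ^ p by positivity)]
    have h2 : A ^ (p + 1) * (y / ((t - x) ^ 2 + y ^ 2)) ≤ A ^ (p + 1) / y := by
      have hyy : y / ((t - x) ^ 2 + y ^ 2) ≤ 1 / y := by
        rw [div_le_div_iff₀ hDN hy]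
        nlinarith
      calc A ^ (p + 1) * (y / ((t - x) ^ 2 + y ^ 2)) ≤ A ^ (p + 1) * (1 / y) :=
            mul_le_mul_of_nonneg_left hyy (by positivity)
        _ = A ^ (p + 1) / y := by ring
    calc ((p + 1) * y * A ^ p / D + A ^ (p + 1) * (y / ((t - x) ^ 2 + y ^ 2))) / |t| ^ (p + 1)
        ≤ CB / |t| ^ (p + 1) := by
          gcongr
          rw [hCB]
          have e3 : (0:ℝ) ≤ 1 / y := by positivity
          linarith
      _ = (2 * CB) * (1 / (2 * |t| ^ (p + 1))) := by
          field_simp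
      _ ≤ (2 * CB) * (1 / (1 + |t| ^ (p + 1))) := by
          apply mul_le_mul_of_nonneg_left _ (by positivity)
          apply one_div_le_one_div_of_le hden (by linarith)

lemma sigmaFinite_aux (p : ℕ) (μ : Measure ℝ)
    (hμ : ∫⁻ t : ℝ, ENNReal.ofReal (1 / (1 + |t| ^ (p + 1))) ∂μ < ⊤) :
    SigmaFinite μ := by
  constructor
  refine ⟨⟨fun n => {t : ℝ | |t| ≤ n}, fun _ => trivial, fun n => ?_, ?_⟩⟩
  · set g : ℝ → ℝ≥0∞ := fun t => ENNReal.ofReal (1 / (1 + |t| ^ (p + 1))) with hg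
    set ε : ℝ≥0∞ := ENNReal.ofReal (1 / (1 + (n : ℝ) ^ (p + 1))) with hε
    have hεpos : 0 < ε := by
      rw [hε]
      apply ENNReal.ofReal_pos.2
      positivity
    have hεtop : ε ≠ ⊤ := by rw [hε]; exact ENNReal.ofReal_ne_top
    have hsub : {t : ℝ | |t| ≤ (n : ℝ)} ⊆ {t : ℝ | ε ≤ g t} := by
      intro t ht
      simp only [Set.mem_setOf_eq] at ht ⊢
      rw [hε, hg]
      apply ENNReal.ofReal_le_ofReal
      have h1 : |t| ^ (p + 1) ≤ (n : ℝ) ^ (p + 1) := pow_le_pow_left₀ (abs_nonneg t) ht _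
      gcongr
    have hgmeas : AEMeasurable g μ := by
      apply Measurable.aemeasurable
      apply Measurable.ennreal_ofReal
      apply Measurable.div measurable_const
      exact (continuous_const.add (continuous_abs.pow (p + 1))).measurable
    have hmarkov := meas_ge_le_lintegral_div hgmeas hεpos.ne' hεtop
    calc μ {t : ℝ | |t| ≤ (n : ℝ)} ≤ μ {t : ℝ | ε ≤ g t} := measure_mono hsub
      _ ≤ (∫⁻ t, g t ∂μ) / ε := hmarkov
      _ < ⊤ := ENNReal.div_lt_top hμ.ne hεpos.ne'
  · apply Set.eq_univ_of_forall
    intro t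
    simp only [Set.mem_iUnion, Set.mem_setOf_eq]
    obtain ⟨n, hn⟩ := exists_nat_ge |t|
    exact ⟨n, hn⟩

lemma Bker_integrable (p : ℕ) (y x : ℝ) (hy : 0 < y) (μ : Measure ℝ)
    (hμ : ∫⁻ t : ℝ, ENNReal.ofReal (1 / (1 + |t| ^ (p + 1))) ∂μ < ⊤) :
    Integrable (fun t : ℝ => Bker p y x t) μ := by
  apply Integrable.mono' ((f0_integrable p μ hμ).const_mul
    (2 * ((p + 1) * Real.sqrt (x ^ 2 + y ^ 2) ^ p
        + Real.sqrt (x ^ 2 + y ^ 2) ^ (p + 1) / y + 1 / y)))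
    (Bker_measurable_t p y x hy).aestronglyMeasurable
  apply Filter.Eventually.of_forall fun t => ?_
  rw [Real.norm_eq_abs, abs_of_nonneg (Bker_nonneg p y x t hy)]
  exact Bker_bound p y x hy t

lemma K_measurable (p : ℕ) (y : ℝ) (hy : 0 < y) :
    Measurable fun q : ℝ × ℝ =>
      ENNReal.ofReal (Bker p y q.1 q.2 / Real.sqrt (q.1 ^ 2 + (y + 1) ^ 2) ^ (p + 1)) := by
  apply Measurable.ennreal_ofReal
  apply Measurable.div
  · have : (fun q : ℝ × ℝ => Bker p y q.1 q.2) = fun q : ℝ × ℝ =>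
        if |q.2| ≤ 1 then y / ((q.2 - q.1) ^ 2 + y ^ 2)
        else ((p + 1) * y * Real.sqrt (q.1 ^ 2 + y ^ 2) ^ p
              / Real.sqrt ((q.2 - q.1) ^ 2 + y ^ 2)
            + Real.sqrt (q.1 ^ 2 + y ^ 2) ^ (p + 1) * (y / ((q.2 - q.1) ^ 2 + y ^ 2)))
          / |q.2| ^ (p + 1) := by
      funext q; rw [Bker]
    rw [this]
    have hden : Continuous fun q : ℝ × ℝ => (q.2 - q.1) ^ 2 + y ^ 2 :=
      ((continuous_snd.sub continuous_fst).pow 2).add continuous_const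
    have hA : Continuous fun q : ℝ × ℝ => Real.sqrt (q.1 ^ 2 + y ^ 2) :=
      ((continuous_fst.pow 2).add continuous_const).sqrt
    apply Measurable.ite
    · exact measurableSet_le (continuous_abs.comp continuous_snd).measurable measurable_const
    · exact (continuous_const.div hden fun q => (by positivity : (0:ℝ) < (q.2 - q.1) ^ 2 + y ^ 2).ne').measurable
    · apply Measurable.div
      · apply Measurable.add
        · exact ((continuous_const.mul (hA.pow p)).div hden.sqrt
            fun q => (Real.sqrt_pos.2 (by positivity)).ne').measurable
        · exact ((hA.pow (p + 1)).mul (continuous_const.div hden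
            fun q => (by positivity : (0:ℝ) < (q.2 - q.1) ^ 2 + y ^ 2).ne')).measurable
      · exact ((continuous_abs.comp continuous_snd).pow (p + 1)).measurable
  · exact (((continuous_fst.pow 2).add continuous_const).sqrt.pow (p + 1)).measurable

theorem key_bound (p : ℕ) (a : ℕ → ℝ) (μ : Measure ℝ)
    (hμ : ∫⁻ t : ℝ, ENNReal.ofReal (1 / (1 + |t| ^ (p + 1))) ∂μ < ⊤)
    (G : ℂ → ℝ)
    (hGH : ∀ z : ℂ, 0 < z.im →
      G z ≤ ((∑ k ∈ Finset.range (p + 1), (a k : ℂ) * z ^ k) +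
          (1 / (π : ℂ)) * ∫ t : ℝ, modCauchy p z t ∂μ).im)
    (y : ℝ) (hy : 0 < y) :
    ∫⁻ x : ℝ, ENNReal.ofReal
        (G (x + y * Complex.I) / (x ^ 2 + (y + 1) ^ 2) ^ (((p : ℝ) + 1) / 2))
      ≤ ENNReal.ofReal (π * ∑ k ∈ Finset.range (p + 1), |a k| * k)
        + ENNReal.ofReal (π⁻¹) * (ENNReal.ofReal (2 * (p + 2) * π)
            * ∫⁻ t : ℝ, ENNReal.ofReal (1 / (1 + |t| ^ (p + 1))) ∂μ) := by
  have hsf : SigmaFinite μ := sigmaFinite_aux p μ hμ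
  have hW : ∀ x : ℝ, (x ^ 2 + (y + 1) ^ 2) ^ (((p : ℝ) + 1) / 2)
      = Real.sqrt (x ^ 2 + (y + 1) ^ 2) ^ (p + 1) := fun x => W_eq p (y + 1) x
  simp only [hW]
  set W : ℝ → ℝ := fun x => Real.sqrt (x ^ 2 + (y + 1) ^ 2) ^ (p + 1) with hWdef
  have hWpos : ∀ x, 0 < W x := fun x => by
    rw [hWdef]
    have : 0 < Real.sqrt (x ^ 2 + (y + 1) ^ 2) := Real.sqrt_pos.2 (by positivity)
    positivity
  set Pb : ℝ → ℝ := fun x =>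
    ∑ k ∈ Finset.range (p + 1), |a k| * k * y * Real.sqrt (x ^ 2 + y ^ 2) ^ (k - 1) with hPb
  set S : ℝ → ℝ := fun x => ∫ t : ℝ, Bker p y x t ∂μ with hS
  -- pointwise domination
  have hdom : ∀ x : ℝ, G (x + y * Complex.I) ≤ Pb x + π⁻¹ * S x := by
    intro x
    have hzim : ((x : ℂ) + y * Complex.I).im = y := by simp
    have h1 := hGH ((x : ℂ) + y * Complex.I) (by rw [hzim]; exact hy)
    rw [Complex.add_im] at h1
    set z : ℂ := (x : ℂ) + y * Complex.I with hz
    have hInt := modCauchy_integrable p z (by rw [hz, hzim]; exact hy) μ hμ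
    have hJ : ((1 / (π : ℂ)) * ∫ t : ℝ, modCauchy p z t ∂μ).im
        = π⁻¹ * (∫ t : ℝ, modCauchy p z t ∂μ).im := by
      rw [one_div, ← Complex.ofReal_inv, Complex.im_ofReal_mul]
    have hJim : (∫ t : ℝ, modCauchy p z t ∂μ).im
        = ∫ t : ℝ, (modCauchy p z t).im ∂μ := by
      have h := integral_im (𝕜 := ℂ) hInt
      simpa using h.symm
    have hle : ∫ t : ℝ, (modCauchy p z t).im ∂μ ≤ S x := by
      apply integral_mono hInt.im (Bker_integrable p y x hy μ hμ)
      intro t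
      exact im_modCauchy_le p x y t hy
    have hQ := poly_im_le p a x y hy
    have : ((1 / (π : ℂ)) * ∫ t : ℝ, modCauchy p z t ∂μ).im ≤ π⁻¹ * S x := by
      rw [hJ, hJim]
      exact mul_le_mul_of_nonneg_left hle (by positivity)
    exact h1.trans (add_le_add hQ this)
  -- pointwise, after division by W
  have hpt : ∀ x : ℝ, ENNReal.ofReal (G (x + y * Complex.I) / W x)
      ≤ ENNReal.ofReal (Pb x / W x) + ENNReal.ofReal (π⁻¹ * S x / W x) := by
    intro x
    have h2 : G (x + y * Complex.I) / W x ≤ Pb x / W x + π⁻¹ * S x / W x := by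
      rw [← add_div]
      exact div_le_div_of_nonneg_right (hdom x) (hWpos x).le
    exact (ENNReal.ofReal_le_ofReal h2).trans ENNReal.ofReal_add_le
  have hPbmeas : Measurable fun x : ℝ => ENNReal.ofReal (Pb x / W x) := by
    apply Measurable.ennreal_ofReal
    apply Measurable.div
    · rw [hPb]
      apply Finset.measurable_sum
      intro k _
      exact (continuous_const.mul ((((continuous_id.pow 2).add
        continuous_const).sqrt).pow (k - 1))).measurable
    · exact (((continuous_id.pow 2).add continuous_const).sqrt.pow (p + 1)).measurable
  calc ∫⁻ x : ℝ, ENNReal.ofReal (G (x + y * Complex.I) / W x)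
      ≤ ∫⁻ x : ℝ, (ENNReal.ofReal (Pb x / W x) + ENNReal.ofReal (π⁻¹ * S x / W x)) :=
        lintegral_mono hpt
    _ = (∫⁻ x : ℝ, ENNReal.ofReal (Pb x / W x))
        + ∫⁻ x : ℝ, ENNReal.ofReal (π⁻¹ * S x / W x) := lintegral_add_left hPbmeas _
    _ ≤ ENNReal.ofReal (π * ∑ k ∈ Finset.range (p + 1), |a k| * k)
        + ENNReal.ofReal (π⁻¹) * (ENNReal.ofReal (2 * (p + 2) * π)
            * ∫⁻ t : ℝ, ENNReal.ofReal (1 / (1 + |t| ^ (p + 1))) ∂μ) := by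
      apply add_le_add
      · -- polynomial part
        calc ∫⁻ x : ℝ, ENNReal.ofReal (Pb x / W x)
            = ∫⁻ x : ℝ, ∑ k ∈ Finset.range (p + 1), ENNReal.ofReal
                (|a k| * k * y * Real.sqrt (x ^ 2 + y ^ 2) ^ (k - 1) / W x) := by
              congr 1; funext x
              rw [hPb]
              rw [Finset.sum_div]
              rw [ENNReal.ofReal_sum_of_nonneg]
              intro k _
              have := (hWpos x).le
              positivity
          _ = ∑ k ∈ Finset.range (p + 1), ∫⁻ x : ℝ, ENNReal.ofReal
                (|a k| * k * y * Real.sqrt (x ^ 2 + y ^ 2) ^ (k - 1) / W x) := by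
              apply lintegral_finset_sum
              intro k _
              apply Measurable.ennreal_ofReal
              apply Measurable.div
              · exact (continuous_const.mul ((((continuous_id.pow 2).add
                  continuous_const).sqrt).pow (k - 1))).measurable
              · exact (((continuous_id.pow 2).add continuous_const).sqrt.pow (p + 1)).measurable
          _ ≤ ∑ k ∈ Finset.range (p + 1), ENNReal.ofReal (|a k| * k * π) := by
              apply Finset.sum_le_sum
              intro k hk
              exact lint_poly p k (Nat.lt_succ_iff.1 (Finset.mem_range.1 hk)) y hy (a k)
          _ = ENNReal.ofReal (π * ∑ k ∈ Finset.range (p + 1), |a k| * k) := by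
              rw [← ENNReal.ofReal_sum_of_nonneg (fun k _ => by positivity)]
              congr 1
              rw [Finset.mul_sum]
              apply Finset.sum_congr rfl
              intro k _
              ring
      · -- kernel part
        calc ∫⁻ x : ℝ, ENNReal.ofReal (π⁻¹ * S x / W x)
            ≤ ∫⁻ x : ℝ, ENNReal.ofReal π⁻¹
                * ∫⁻ t : ℝ, ENNReal.ofReal (Bker p y x t / W x) ∂μ := by
              have hker : ∀ x : ℝ, ENNReal.ofReal (π⁻¹ * S x / W x)
                  ≤ ENNReal.ofReal π⁻¹
                    * ∫⁻ t : ℝ, ENNReal.ofReal (Bker p y x t / W x) ∂μ := by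
                intro x
                have e1 : π⁻¹ * S x / W x = π⁻¹ * (S x / W x) := by ring
                rw [e1, ENNReal.ofReal_mul (by positivity)]
                apply mul_le_mul_right ?_ _
                have e2 : S x / W x = ∫ t : ℝ, Bker p y x t / W x ∂μ := by
                  simp only [hS]
                  exact (integral_div (W x) fun t => Bker p y x t).symm
                rw [e2]
                exact ofReal_integral_le μ _
              exact lintegral_mono hker
          _ = ENNReal.ofReal π⁻¹
              * ∫⁻ x : ℝ, ∫⁻ t : ℝ, ENNReal.ofReal (Bker p y x t / W x) ∂μ := by
              rw [← lintegral_const_mul' _ _ ENNReal.ofReal_ne_top]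
          _ = ENNReal.ofReal π⁻¹
              * ∫⁻ t : ℝ, (∫⁻ x : ℝ, ENNReal.ofReal (Bker p y x t / W x)) ∂μ := by
              congr 1
              exact lintegral_lintegral_swap (μ := volume) (ν := μ) (K_measurable p y hy).aemeasurable
          _ ≤ ENNReal.ofReal π⁻¹ * (ENNReal.ofReal (2 * (p + 2) * π)
              * ∫⁻ t : ℝ, ENNReal.ofReal (1 / (1 + |t| ^ (p + 1))) ∂μ) := by
              apply mul_le_mul_right
              calc ∫⁻ t : ℝ, (∫⁻ x : ℝ, ENNReal.ofReal (Bker p y x t / W x)) ∂μ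
                  ≤ ∫⁻ t : ℝ, ENNReal.ofReal ((2 * (p + 2) * π)
                      * (1 / (1 + |t| ^ (p + 1)))) ∂μ := by
                    apply lintegral_mono
                    intro t
                    exact lint_x p y t hy
                _ = ENNReal.ofReal (2 * (p + 2) * π)
                      * ∫⁻ t : ℝ, ENNReal.ofReal (1 / (1 + |t| ^ (p + 1))) ∂μ := by
                    rw [← lintegral_const_mul' _ _ ENNReal.ofReal_ne_top]
                    congr 1; funext t
                    rw [← ENNReal.ofReal_mul (by positivity)]

end Stmt13Aux

/-- If a subharmonic `G` on the upper half plane is dominated by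
`H(z) = Im[Q_p(z) + (1/π)∫ C_p(z,t) dμ(t)]`, then
`sup_{y>0} ∫ G(x+iy)/[x²+(y+1)²]^{(p+1)/2} dx < ∞`. -/
theorem stmt_13 (p : ℕ) (a : ℕ → ℝ) (μ : Measure ℝ)
    (hμ : ∫⁻ t : ℝ, ENNReal.ofReal (1 / (1 + |t| ^ (p + 1))) ∂μ < ⊤)
    (G : ℂ → ℝ) (hG : SubharmonicOnC G {z : ℂ | 0 < z.im})
    (hGH : ∀ z : ℂ, 0 < z.im →
      G z ≤ ((∑ k ∈ Finset.range (p + 1), (a k : ℂ) * z ^ k) +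
          (1 / (π : ℂ)) * ∫ t : ℝ, modCauchy p z t ∂μ).im) :
    ∃ M : ℝ, ∀ y : ℝ, 0 < y →
      (∫ x : ℝ, G (x + y * Complex.I) / (x ^ 2 + (y + 1) ^ 2) ^ (((p : ℝ) + 1) / 2)) ≤ M := by
  set E : ℝ≥0∞ := ENNReal.ofReal (π * ∑ k ∈ Finset.range (p + 1), |a k| * k)
      + ENNReal.ofReal (π⁻¹) * (ENNReal.ofReal (2 * (p + 2) * π)
          * ∫⁻ t : ℝ, ENNReal.ofReal (1 / (1 + |t| ^ (p + 1))) ∂μ) with hE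
  have hEne : E ≠ ⊤ := by
    rw [hE]
    exact ENNReal.add_ne_top.2 ⟨ENNReal.ofReal_ne_top,
      ENNReal.mul_ne_top ENNReal.ofReal_ne_top
        (ENNReal.mul_ne_top ENNReal.ofReal_ne_top hμ.ne)⟩
  refine ⟨E.toReal, fun y hy => ?_⟩
  have key := Stmt13Aux.key_bound p a μ hμ G hGH y hy
  rcases le_or_gt
    (∫ x : ℝ, G (x + y * Complex.I) / (x ^ 2 + (y + 1) ^ 2) ^ (((p : ℝ) + 1) / 2)) 0 with h0 | h0
  · exact h0.trans ENNReal.toReal_nonneg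
  · calc (∫ x : ℝ, G (x + y * Complex.I) / (x ^ 2 + (y + 1) ^ 2) ^ (((p : ℝ) + 1) / 2))
        = (ENNReal.ofReal (∫ x : ℝ,
            G (x + y * Complex.I) / (x ^ 2 + (y + 1) ^ 2) ^ (((p : ℝ) + 1) / 2))).toReal :=
          (ENNReal.toReal_ofReal h0.le).symm
      _ ≤ E.toReal := by
          apply ENNReal.toReal_mono hEne
          exact (Stmt13Aux.ofReal_integral_le _ _).trans (key.trans_eq (by rw [hE]))
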